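/- Let a ∈ O_L and let (F_m)_{m≥0} be a sequence in Λ that is norm-compatible for a. Then for every m ≥ 1, both entries of the vector C'_1·C'_2···C'_m·(F_m, −Φ_m·F_{m−1})ᵀ lie in the ideal Φ_1·Φ_2···Φ_m·Λ. (This is the divisibility (3.5) established by induction in the proof of Theorem 3.3 of the paper.) -/

import Mathlib

/-!
Setting: `p ≥ 5` a prime, `𝕆` the ring of integers of a finite extension of `ℚ_p`
(modelled as a characteristic-zero discrete valuation ring) with uniformizer `ϖ`
satisfying `ϖ ∣ p`, and `Λ = 𝕆⟦X⟧`.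
-/

open PowerSeries

/-- `ω_m = (1+X)^{p^m} − 1`. -/
noncomputable def omegaPS (p : ℕ) (R : Type*) [CommRing R] (m : ℕ) : PowerSeries R :=
  (1 + PowerSeries.X) ^ (p ^ m) - 1

/-- `Φ_m = Σ_{i<p} (1+X)^{i·p^{m−1}}` (meaningful for `m ≥ 1`). -/
noncomputable def PhiPS (p : ℕ) (R : Type*) [CommRing R] (m : ℕ) : PowerSeries R :=
  ∑ i ∈ Finset.range p, (1 + PowerSeries.X) ^ (i * p ^ (m - 1))

/-- The adjugate matrix `C'_j = ((0, −1), (Φ_j, a))` of `C_j`. -/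
noncomputable def Cadj (p : ℕ) (R : Type*) [CommRing R] (a : R) (j : ℕ) :
    Matrix (Fin 2) (Fin 2) (PowerSeries R) :=
  !![0, -1; PhiPS p R j, PowerSeries.C (R := R) a]

/-- The ordered product `C'_1 · C'_2 ⋯ C'_m` (with empty product `1`). -/
noncomputable def CadjProd (p : ℕ) (R : Type*) [CommRing R] (a : R) :
    ℕ → Matrix (Fin 2) (Fin 2) (PowerSeries R)
  | 0 => 1
  | m + 1 => CadjProd p R a m * Cadj p R a (m + 1)

/-- A sequence `(F_m)_{m≥0}` in `Λ` is norm-compatible for `a` if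
`F_{m+1} ≡ a·F_m − Φ_m·F_{m−1} (mod ω_m·Λ)` for every `m ≥ 1`. -/
def NormCompat (p : ℕ) (R : Type*) [CommRing R] (a : R) (F : ℕ → PowerSeries R) : Prop :=
  ∀ m : ℕ, 1 ≤ m →
    omegaPS p R m ∣ (F (m + 1) - (PowerSeries.C (R := R) a * F m - PhiPS p R m * F (m - 1)))


lemma omega_succ (p : ℕ) (R : Type*) [CommRing R] (m : ℕ) :
    omegaPS p R (m + 1) = PhiPS p R (m + 1) * omegaPS p R m := by
  unfold omegaPS PhiPS
  have e1 : ∀ i : ℕ, (1 + (X : PowerSeries R)) ^ (i * p ^ (m + 1 - 1)) =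
      ((1 + X) ^ (p ^ m)) ^ i := by
    intro i
    rw [← pow_mul, Nat.add_sub_cancel, mul_comm]
  calc (1 + (X : PowerSeries R)) ^ p ^ (m + 1) - 1
      = ((1 + X) ^ (p ^ m)) ^ p - 1 := by rw [← pow_mul, ← pow_succ]
    _ = (∑ i ∈ Finset.range p, ((1 + (X : PowerSeries R)) ^ (p ^ m)) ^ i) *
          ((1 + X) ^ (p ^ m) - 1) := (geom_sum_mul _ p).symm
    _ = _ := by
        congr 1
        exact Finset.sum_congr rfl fun i _ => (e1 i).symm

lemma prod_dvd_omega (p : ℕ) (R : Type*) [CommRing R] :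
    ∀ m : ℕ, (∏ j ∈ Finset.Icc 1 m, PhiPS p R j) ∣ omegaPS p R m := by
  intro m
  induction m with
  | zero => simp
  | succ n ih =>
    rw [Finset.prod_Icc_succ_top (by omega : 1 ≤ n + 1), omega_succ,
      mul_comm (PhiPS p R (n + 1))]
    exact mul_dvd_mul ih dvd_rfl

/-- if `(F_m)` is norm-compatible for `a`, then for every `m ≥ 1` both
entries of `C'_1·C'_2⋯C'_m·(F_m, −Φ_m·F_{m−1})ᵀ` lie in `Φ_1·Φ_2⋯Φ_m·Λ`. -/
theorem adjugate_product_divisibility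
    (p : ℕ) (hp : p.Prime) (hp5 : 5 ≤ p)
    (𝕆 : Type*) [CommRing 𝕆] [IsDomain 𝕆] [IsDiscreteValuationRing 𝕆] [CharZero 𝕆]
    (ϖ : 𝕆) (hϖ : Irreducible ϖ) (hpϖ : ϖ ∣ (p : 𝕆))
    (a : 𝕆) (F : ℕ → PowerSeries 𝕆) (hF : NormCompat p 𝕆 a F) :
    ∀ m : ℕ, 1 ≤ m → ∀ i : Fin 2,
      (∏ j ∈ Finset.Icc 1 m, PhiPS p 𝕆 j) ∣
        (CadjProd p 𝕆 a m).mulVec ![F m, -(PhiPS p 𝕆 m * F (m - 1))] i := by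
  intro m hm
  induction m, hm using Nat.le_induction with
  | base =>
    intro i
    have h1 : CadjProd p 𝕆 a 1 = Cadj p 𝕆 a 1 := by
      show CadjProd p 𝕆 a 0 * Cadj p 𝕆 a 1 = _
      show (1 : Matrix (Fin 2) (Fin 2) (PowerSeries 𝕆)) * Cadj p 𝕆 a 1 = _
      rw [one_mul]
    rw [Finset.Icc_self, Finset.prod_singleton, h1]
    fin_cases i <;>
      simp [Cadj, Matrix.mulVec, dotProduct, Fin.sum_univ_two]
    exact ⟨F 1 - PowerSeries.C (R := 𝕆) a * F 0, by ring⟩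
  | succ n hn ih =>
    obtain ⟨G, hG⟩ := hF n hn
    have key : (Cadj p 𝕆 a (n + 1)).mulVec
          ![F (n + 1), -(PhiPS p 𝕆 (n + 1) * F (n + 1 - 1))]
        = PhiPS p 𝕆 (n + 1) •
            (![F n, -(PhiPS p 𝕆 n * F (n - 1))] + omegaPS p 𝕆 n • ![(0 : PowerSeries 𝕆), G]) := by
      funext j
      fin_cases j <;>
        simp [Cadj, Matrix.mulVec, dotProduct, Fin.sum_univ_two, smul_eq_mul,
          Nat.add_sub_cancel]
      · linear_combination PhiPS p 𝕆 (n + 1) * hG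
    intro i
    have hcp : CadjProd p 𝕆 a (n + 1) = CadjProd p 𝕆 a n * Cadj p 𝕆 a (n + 1) := rfl
    rw [hcp, ← Matrix.mulVec_mulVec, key, Matrix.mulVec_smul, Matrix.mulVec_add,
      Matrix.mulVec_smul, Finset.prod_Icc_succ_top (by omega : 1 ≤ n + 1),
      mul_comm (∏ j ∈ Finset.Icc 1 n, PhiPS p 𝕆 j) (PhiPS p 𝕆 (n + 1))]
    simp only [Pi.smul_apply, Pi.add_apply, smul_eq_mul]
    exact mul_dvd_mul dvd_rfl ((ih i).add ((prod_dvd_omega p 𝕆 n).mul_right _))
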